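/- Let X be a Banach space and Y a normed space with a continuous linear embedding ι : Y → X. Let Δ = {(s,t) : 0 ≤ s ≤ t} and U : Δ → L(X) a family of bounded linear operators with (s,t) ↦ U(t,s)x continuous for each x ∈ X and ‖U(t,s)‖_{L(X)} ≤ c·exp(−λ(t−s)) for constants c > 0, λ > 0. Suppose moreover that for all 0 ≤ s < t there exist bounded linear operators W(t,s) : X → Y with ι ∘ W(t,s) = U(t,s) and ‖W(t,s)‖_{L(X,Y)} ≤ C̃·exp(−λ(t−s))·(t−s)^{−η} for constants C̃ > 0 and η ∈ (0,1). Let F : X → X be globally Lipschitz with constant C_F > 0, assume λ > c·C_F, let g : [0,∞) → X be continuous, and let u, v : [0,∞) → X be continuous functions satisfying u(t) = U(t,0)u₀ + ∫₀ᵗ U(t,s)(F(u(s))) ds + g(t) and v(t) = U(t,0)v₀ + ∫₀ᵗ U(t,s)(F(v(s))) ds + g(t) for all t ≥ 0, and suppose s ↦ W(t̃,s)(F(u(s)) − F(v(s))) is Bochner integrable on [0,t̃] for a given t̃ > 0. Then the element w := W(t̃,0)(u₀ − v₀) + ∫₀^{t̃} W(t̃,s)(F(u(s)) − F(v(s)))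 ds of Y satisfies ι(w) = u(t̃) − v(t̃) and ‖w‖_Y ≤ κ·‖u₀ − v₀‖_X, where κ := C̃·t̃^{−η} + C_F·C̃·c·exp(c·C_F/λ)·∫₀^{t̃} exp(−λs)·s^{−η} ds. -/

import Mathlib

open MeasureTheory


section AuxSt11
open Set

lemma contUcomp {X : Type*} [NormedAddCommGroup X] [NormedSpace ℝ X]
    (U : ℝ → ℝ → X →L[ℝ] X)
    (hUcont : ∀ x : X, ContinuousOn (fun p : ℝ × ℝ => U p.2 p.1 x)
      {p : ℝ × ℝ | 0 ≤ p.1 ∧ p.1 ≤ p.2})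
    (c lam : ℝ) (hc : 0 < c) (hlam : 0 < lam)
    (hU : ∀ s t : ℝ, 0 ≤ s → s ≤ t → ‖U t s‖ ≤ c * Real.exp (-lam * (t - s)))
    (t : ℝ) (f : ℝ → X) (hf : ContinuousOn f (Set.Icc 0 t)) :
    ContinuousOn (fun s => U t s (f s)) (Set.Icc 0 t) := by
  intro s₀ hs₀
  have hbnd : ∀ s ∈ Set.Icc (0:ℝ) t, ‖U t s‖ ≤ c := by
    intro s hs
    refine (hU s t hs.1 hs.2).trans ?_
    have : Real.exp (-lam * (t - s)) ≤ 1 := by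
      rw [Real.exp_le_one_iff]
      nlinarith [hs.2]
    nlinarith [Real.exp_pos (-lam * (t - s))]
  have h2 : ContinuousWithinAt (fun s => U t s (f s₀)) (Set.Icc 0 t) s₀ := by
    have hmap : Set.MapsTo (fun s : ℝ => (s, t)) (Set.Icc 0 t)
        {p : ℝ × ℝ | 0 ≤ p.1 ∧ p.1 ≤ p.2} := fun s hs => ⟨hs.1, hs.2⟩
    exact ((hUcont (f s₀)).comp
      ((continuous_id.prodMk continuous_const).continuousOn) hmap) s₀ hs₀
  have h1 : Filter.Tendsto (fun s => U t s (f s - f s₀)) (nhdsWithin s₀ (Set.Icc 0 t))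
      (nhds 0) := by
    apply squeeze_zero_norm' (a := fun s => c * ‖f s - f s₀‖)
    · filter_upwards [self_mem_nhdsWithin] with s hs
      calc ‖U t s (f s - f s₀)‖ ≤ ‖U t s‖ * ‖f s - f s₀‖ := (U t s).le_opNorm _
        _ ≤ c * ‖f s - f s₀‖ := by
            exact mul_le_mul_of_nonneg_right (hbnd s hs) (norm_nonneg _)
    · have : Filter.Tendsto (fun s => f s - f s₀) (nhdsWithin s₀ (Set.Icc 0 t))
          (nhds 0) := by
        have := (hf s₀ hs₀).tendsto.sub (tendsto_const_nhds (x := f s₀))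
        simpa using this
      simpa using (this.norm.const_mul c)
  have : Filter.Tendsto (fun s => U t s (f s - f s₀) + U t s (f s₀))
      (nhdsWithin s₀ (Set.Icc 0 t)) (nhds (0 + U t s₀ (f s₀))) := h1.add h2
  simpa [ContinuousWithinAt, (U t _).map_sub, sub_add_cancel] using this


lemma gronwall_int {φ : ℝ → ℝ} {a K T : ℝ} (hT : 0 ≤ T) (ha : 0 ≤ a) (hK : 0 < K)
    (hφc : ContinuousOn φ (Set.Icc 0 T)) (hφ0 : ∀ s ∈ Set.Icc (0:ℝ) T, 0 ≤ φ s)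
    (hineq : ∀ s ∈ Set.Icc (0:ℝ) T, φ s ≤ a + K * ∫ r in (0:ℝ)..s, φ r) :
    ∀ s ∈ Set.Icc (0:ℝ) T, φ s ≤ a * Real.exp (K * s) := by
  set ψ : ℝ → ℝ := fun s => ∫ r in (0:ℝ)..s, φ r with hψ
  have hint : ∀ x ∈ Set.Icc (0:ℝ) T, IntervalIntegrable φ volume 0 x := by
    intro x hx
    exact (hφc.mono (Set.Icc_subset_Icc le_rfl hx.2)).intervalIntegrable_of_Icc hx.1
  have hψc : ContinuousOn ψ (Set.Icc 0 T) := by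
    have h0 : (0:ℝ) ∈ Set.uIcc (0:ℝ) T := by
      rw [Set.uIcc_of_le hT]; exact ⟨le_rfl, hT⟩
    have := intervalIntegral.continuousOn_primitive_interval'
      (hint T ⟨hT, le_rfl⟩) h0
    rwa [Set.uIcc_of_le hT] at this
  have hψnn : ∀ x ∈ Set.Icc (0:ℝ) T, 0 ≤ ψ x := by
    intro x hx
    apply intervalIntegral.integral_nonneg hx.1
    intro r hr
    exact hφ0 r ⟨hr.1, hr.2.trans hx.2⟩
  have hder : ∀ x ∈ Set.Ico (0:ℝ) T, HasDerivWithinAt ψ (φ x) (Set.Ici x) x := by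
    intro x hx
    have hmem : Set.Icc x T ∈ nhdsWithin x (Set.Ioi x) := by
      refine Filter.mem_of_superset (Filter.inter_mem self_mem_nhdsWithin
        (mem_nhdsWithin_of_mem_nhds (Iic_mem_nhds hx.2))) ?_
      rintro y ⟨hy1, hy2⟩
      exact ⟨le_of_lt hy1, hy2⟩
    have hmeas : StronglyMeasurableAtFilter φ (nhdsWithin x (Set.Ioi x)) :=
      ⟨Set.Icc x T, hmem,
        (hφc.mono (Set.Icc_subset_Icc hx.1 le_rfl)).aestronglyMeasurable
          measurableSet_Icc⟩
    have hcw : ContinuousWithinAt φ (Set.Ioi x) x := by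
      have h1 : ContinuousWithinAt φ (Set.Icc x T) x :=
        (hφc.mono (Set.Icc_subset_Icc hx.1 le_rfl)) x ⟨le_rfl, hx.2.le⟩
      rw [ContinuousWithinAt, nhdsWithin_Icc_eq_nhdsGE hx.2] at h1
      exact h1.mono_left (nhdsWithin_mono x Set.Ioi_subset_Ici_self)
    exact intervalIntegral.integral_hasDerivWithinAt_right (hint x ⟨hx.1, hx.2.le⟩)
      hmeas hcw
  have hgron := norm_le_gronwallBound_of_norm_deriv_right_le (f := ψ) (f' := φ)
      (δ := 0) (K := K) (ε := a) (a := 0) (b := T) hψc hder (by simp [hψ]) ?_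
  · intro s hs
    have hb := hgron s hs
    rw [Real.norm_eq_abs, abs_of_nonneg (hψnn s hs),
      gronwallBound_of_K_ne_0 hK.ne', sub_zero] at hb
    have h2 := hineq s hs
    have : a + K * ψ s ≤ a + K * (a / K * (Real.exp (K * s) - 1)) := by
      nlinarith
    calc φ s ≤ a + K * ψ s := h2
      _ ≤ a + K * (a / K * (Real.exp (K * s) - 1)) := this
      _ = a * Real.exp (K * s) := by field_simp; ring
  · intro x hx
    have h1 := hineq x ⟨hx.1, hx.2.le⟩
    rw [Real.norm_eq_abs, abs_of_nonneg (hφ0 x ⟨hx.1, hx.2.le⟩),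
      Real.norm_eq_abs, abs_of_nonneg (hψnn x ⟨hx.1, hx.2.le⟩)]
    linarith


section
variable {X : Type*} [NormedAddCommGroup X] [NormedSpace ℝ X] [CompleteSpace X]
    (U : ℝ → ℝ → X →L[ℝ] X)
    (hUcont : ∀ x : X, ContinuousOn (fun p : ℝ × ℝ => U p.2 p.1 x)
      {p : ℝ × ℝ | 0 ≤ p.1 ∧ p.1 ≤ p.2})
    (c lam : ℝ) (hc : 0 < c) (hlam : 0 < lam)
    (hU : ∀ s t : ℝ, 0 ≤ s → s ≤ t → ‖U t s‖ ≤ c * Real.exp (-lam * (t - s)))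
    (F : X → X) (C_F : ℝ) (hCF : 0 < C_F)
    (hF : ∀ x y : X, ‖F x - F y‖ ≤ C_F * ‖x - y‖)
    (g : ℝ → X)
    (u₀ v₀ : X) {u v : ℝ → X}
    (hu : ContinuousOn u (Set.Ici 0)) (hv : ContinuousOn v (Set.Ici 0))
    (hueq : ∀ t : ℝ, 0 ≤ t →
      u t = U t 0 u₀ + (∫ s in (0:ℝ)..t, U t s (F (u s))) + g t)
    (hveq : ∀ t : ℝ, 0 ≤ t →
      v t = U t 0 v₀ + (∫ s in (0:ℝ)..t, U t s (F (v s))) + g t)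

lemma hFcont (hCF : 0 < C_F) (hF : ∀ x y : X, ‖F x - F y‖ ≤ C_F * ‖x - y‖) :
    Continuous F := by
  have : LipschitzWith C_F.toNNReal F := by
    apply LipschitzWith.of_dist_le_mul
    intro x y
    rw [dist_eq_norm, dist_eq_norm, Real.coe_toNNReal _ hCF.le]
    exact hF x y
  exact this.continuous

include hUcont hc hlam hU in
lemma contFu (hCF : 0 < C_F) (hF : ∀ x y : X, ‖F x - F y‖ ≤ C_F * ‖x - y‖)
    {w : ℝ → X} (hw : ContinuousOn w (Set.Ici 0)) (t : ℝ) (ht : 0 ≤ t) :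
    ContinuousOn (fun s => U t s (F (w s))) (Set.Icc 0 t) :=
  contUcomp U hUcont c lam hc hlam hU t _
    ((hFcont F C_F hCF hF).comp_continuousOn (hw.mono (fun x hx => hx.1)))

include hUcont hc hlam hU hCF hF hu hv hueq hveq in
lemma mild_diff (t : ℝ) (ht : 0 ≤ t) :
    u t - v t = U t 0 (u₀ - v₀) + ∫ s in (0:ℝ)..t, U t s (F (u s) - F (v s)) := by
  have hiu : IntervalIntegrable (fun s => U t s (F (u s))) volume 0 t :=
    (contFu U hUcont c lam hc hlam hU F C_F hCF hF hu t ht).intervalIntegrable_of_Icc ht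
  have hiv : IntervalIntegrable (fun s => U t s (F (v s))) volume 0 t :=
    (contFu U hUcont c lam hc hlam hU F C_F hCF hF hv t ht).intervalIntegrable_of_Icc ht
  rw [hueq t ht, hveq t ht, (U t 0).map_sub]
  have hsub : (∫ s in (0:ℝ)..t, U t s (F (u s) - F (v s)))
      = (∫ s in (0:ℝ)..t, U t s (F (u s))) - ∫ s in (0:ℝ)..t, U t s (F (v s)) := by
    rw [← intervalIntegral.integral_sub hiu hiv]
    apply intervalIntegral.integral_congr
    intro s _
    exact (U t s).map_sub _ _
  rw [hsub]
  abel

include hUcont hc hlam hU hCF hF hu hv hueq hveq in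
lemma apriori (hgap : c * C_F < lam) (T : ℝ) (hT : 0 ≤ T) :
    ∀ s ∈ Set.Icc (0:ℝ) T, ‖u s - v s‖ ≤ c * ‖u₀ - v₀‖ := by
  set φ : ℝ → ℝ := fun s => Real.exp (lam * s) * ‖u s - v s‖ with hφdef
  have hφc : ContinuousOn φ (Set.Icc 0 T) := by
    apply ContinuousOn.mul
      ((Real.continuous_exp.comp (continuous_const.mul continuous_id)).continuousOn)
    exact ((hu.mono (fun x hx => hx.1)).sub (hv.mono (fun x hx => hx.1))).norm
  have hφ0 : ∀ s ∈ Set.Icc (0:ℝ) T, 0 ≤ φ s := fun s _ =>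
    mul_nonneg (Real.exp_pos _).le (norm_nonneg _)
  have key : ∀ s ∈ Set.Icc (0:ℝ) T, φ s ≤ c * ‖u₀ - v₀‖ +
      (c * C_F) * ∫ r in (0:ℝ)..s, φ r := by
    intro s hs
    have heq := mild_diff U hUcont c lam hc hlam hU F C_F hCF hF g u₀ v₀
      hu hv hueq hveq s hs.1
    have hbnd1 : ‖U s 0 (u₀ - v₀)‖ ≤ c * Real.exp (-lam * s) * ‖u₀ - v₀‖ := by
      calc ‖U s 0 (u₀ - v₀)‖ ≤ ‖U s 0‖ * ‖u₀ - v₀‖ := (U s 0).le_opNorm _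
        _ ≤ c * Real.exp (-lam * s) * ‖u₀ - v₀‖ := by
            have h0 := hU 0 s le_rfl hs.1
            rw [sub_zero] at h0
            exact mul_le_mul_of_nonneg_right h0 (norm_nonneg _)
    have hgbd : IntervalIntegrable
        (fun r => c * Real.exp (-lam * (s - r)) * (C_F * ‖u r - v r‖)) volume 0 s := by
      apply ContinuousOn.intervalIntegrable_of_Icc hs.1
      apply ContinuousOn.mul
        ((continuous_const.mul (Real.continuous_exp.comp
          (continuous_const.mul (continuous_const.sub continuous_id)))).continuousOn)
      exact continuousOn_const.mul
        (((hu.mono (fun x hx => hx.1)).sub (hv.mono (fun x hx => hx.1))).norm.mono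
          (Set.Icc_subset_Icc le_rfl hs.2))
    have hbnd2 : ‖∫ r in (0:ℝ)..s, U s r (F (u r) - F (v r))‖ ≤
        ∫ r in (0:ℝ)..s, c * Real.exp (-lam * (s - r)) * (C_F * ‖u r - v r‖) := by
      have hae : ∀ᵐ r ∂volume.restrict (Set.uIoc 0 s),
          ‖U s r (F (u r) - F (v r))‖ ≤
            c * Real.exp (-lam * (s - r)) * (C_F * ‖u r - v r‖) := by
        filter_upwards [ae_restrict_mem measurableSet_uIoc] with r hr
        rw [Set.uIoc_of_le hs.1] at hr
        calc ‖U s r (F (u r) - F (v r))‖ ≤ ‖U s r‖ * ‖F (u r) - F (v r)‖ :=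
              (U s r).le_opNorm _
          _ ≤ c * Real.exp (-lam * (s - r)) * (C_F * ‖u r - v r‖) := by
              apply mul_le_mul (hU r s hr.1.le hr.2) (hF _ _) (norm_nonneg _)
              positivity
      have h := intervalIntegral.norm_integral_le_abs_of_norm_le hae hgbd
      refine h.trans ?_
      rw [abs_of_nonneg]
      apply intervalIntegral.integral_nonneg hs.1
      intro r _
      positivity
    have hrw : Real.exp (lam * s) *
        (∫ r in (0:ℝ)..s, c * Real.exp (-lam * (s - r)) * (C_F * ‖u r - v r‖))
        = (c * C_F) * ∫ r in (0:ℝ)..s, φ r := by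
      rw [← intervalIntegral.integral_const_mul, ← intervalIntegral.integral_const_mul]
      apply intervalIntegral.integral_congr
      intro r _
      have hex : Real.exp (lam * s) * Real.exp (-lam * (s - r)) = Real.exp (lam * r) := by
        rw [← Real.exp_add]; ring_nf
      simp only [hφdef]
      linear_combination (c * (C_F * ‖u r - v r‖)) * hex
    have hone : Real.exp (lam * s) * Real.exp (-lam * s) = 1 := by
      rw [← Real.exp_add]; ring_nf; exact Real.exp_zero
    calc φ s = Real.exp (lam * s) * ‖u s - v s‖ := rfl
      _ ≤ Real.exp (lam * s) * (c * Real.exp (-lam * s) * ‖u₀ - v₀‖ +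
          ∫ r in (0:ℝ)..s, c * Real.exp (-lam * (s - r)) * (C_F * ‖u r - v r‖)) := by
          apply mul_le_mul_of_nonneg_left _ (Real.exp_pos _).le
          rw [heq]
          exact (norm_add_le _ _).trans (add_le_add hbnd1 hbnd2)
      _ = c * ‖u₀ - v₀‖ * (Real.exp (lam * s) * Real.exp (-lam * s)) +
          Real.exp (lam * s) *
          (∫ r in (0:ℝ)..s, c * Real.exp (-lam * (s - r)) * (C_F * ‖u r - v r‖)) := by
          ring
      _ = c * ‖u₀ - v₀‖ + (c * C_F) * ∫ r in (0:ℝ)..s, φ r := by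
          rw [hone, hrw, mul_one]
  have hgron := gronwall_int hT (by positivity) (by positivity : (0:ℝ) < c * C_F)
    hφc hφ0 key
  intro s hs
  have h1 := hgron s hs
  have h2 : Real.exp (c * C_F * s) ≤ Real.exp (lam * s) := by
    apply Real.exp_le_exp.2
    nlinarith [hs.1]
  have h3 : φ s ≤ c * ‖u₀ - v₀‖ * Real.exp (lam * s) := by
    refine h1.trans ?_
    apply mul_le_mul_of_nonneg_left h2 (by positivity)
  have hepos := Real.exp_pos (lam * s)
  have : ‖u s - v s‖ * Real.exp (lam * s) ≤ (c * ‖u₀ - v₀‖) * Real.exp (lam * s) := by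
    calc ‖u s - v s‖ * Real.exp (lam * s) = φ s := by rw [hφdef]; ring
      _ ≤ c * ‖u₀ - v₀‖ * Real.exp (lam * s) := h3
  exact le_of_mul_le_mul_right this hepos
end

end AuxSt11

/-- the smoothing property (H₃) for the difference of two mild
solutions, measured in a compactly embedded space `Y`. -/
theorem stmt11
    {X Y : Type*} [NormedAddCommGroup X] [NormedSpace ℝ X] [CompleteSpace X]
    [NormedAddCommGroup Y] [NormedSpace ℝ Y] [CompleteSpace Y]
    (ι : Y →L[ℝ] X) (hι : Function.Injective ι)
    (U : ℝ → ℝ → X →L[ℝ] X)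
    (hUcont : ∀ x : X, ContinuousOn (fun p : ℝ × ℝ => U p.2 p.1 x)
      {p : ℝ × ℝ | 0 ≤ p.1 ∧ p.1 ≤ p.2})
    (c lam : ℝ) (hc : 0 < c) (hlam : 0 < lam)
    (hU : ∀ s t : ℝ, 0 ≤ s → s ≤ t → ‖U t s‖ ≤ c * Real.exp (-lam * (t - s)))
    (W : ℝ → ℝ → X →L[ℝ] Y)
    (Ctil η : ℝ) (hCtil : 0 < Ctil) (hη : 0 < η) (hη1 : η < 1)
    (hWU : ∀ s t : ℝ, 0 ≤ s → s < t → ι.comp (W t s) = U t s)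
    (hW : ∀ s t : ℝ, 0 ≤ s → s < t →
      ‖W t s‖ ≤ Ctil * Real.exp (-lam * (t - s)) * (t - s) ^ (-η))
    (F : X → X) (C_F : ℝ) (hCF : 0 < C_F)
    (hF : ∀ x y : X, ‖F x - F y‖ ≤ C_F * ‖x - y‖)
    (hgap : c * C_F < lam)
    (g : ℝ → X) (hg : ContinuousOn g (Set.Ici 0))
    (u₀ v₀ : X) (u v : ℝ → X)
    (hu : ContinuousOn u (Set.Ici 0)) (hv : ContinuousOn v (Set.Ici 0))
    (hueq : ∀ t : ℝ, 0 ≤ t →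
      u t = U t 0 u₀ + (∫ s in (0:ℝ)..t, U t s (F (u s))) + g t)
    (hveq : ∀ t : ℝ, 0 ≤ t →
      v t = U t 0 v₀ + (∫ s in (0:ℝ)..t, U t s (F (v s))) + g t)
    (ttil : ℝ) (httil : 0 < ttil)
    (hWint : IntegrableOn (fun s => W ttil s (F (u s) - F (v s)))
      (Set.Icc 0 ttil)) :
    ι (W ttil 0 (u₀ - v₀) + ∫ s in (0:ℝ)..ttil, W ttil s (F (u s) - F (v s)))
        = u ttil - v ttil ∧
      ‖W ttil 0 (u₀ - v₀) + ∫ s in (0:ℝ)..ttil, W ttil s (F (u s) - F (v s))‖ ≤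
        (Ctil * ttil ^ (-η) + C_F * Ctil * c * Real.exp (c * C_F / lam) *
          ∫ s in (0:ℝ)..ttil, Real.exp (-lam * s) * s ^ (-η)) * ‖u₀ - v₀‖ := by
  have hWii : IntervalIntegrable (fun s => W ttil s (F (u s) - F (v s))) volume 0 ttil := by
    rw [intervalIntegrable_iff, Set.uIoc_of_le httil.le]
    exact hWint.mono_set Set.Ioc_subset_Icc_self
  have hdiff := mild_diff U hUcont c lam hc hlam hU F C_F hCF hF g u₀ v₀
    hu hv hueq hveq ttil httil.le
  have hap := apriori U hUcont c lam hc hlam hU F C_F hCF hF g u₀ v₀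
    hu hv hueq hveq hgap ttil httil.le
  have hne : ∀ᵐ x : ℝ ∂volume, x ≠ ttil := by
    rw [MeasureTheory.ae_iff]
    simp only [not_not, Set.setOf_eq_eq_singleton]
    exact measure_singleton _
  constructor
  · rw [map_add]
    have h1 : ι (W ttil 0 (u₀ - v₀)) = U ttil 0 (u₀ - v₀) := by
      calc ι (W ttil 0 (u₀ - v₀)) = (ι.comp (W ttil 0)) (u₀ - v₀) := rfl
        _ = U ttil 0 (u₀ - v₀) := by rw [hWU 0 ttil le_rfl httil]
    have h2 : ι (∫ s in (0:ℝ)..ttil, W ttil s (F (u s) - F (v s)))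
        = ∫ s in (0:ℝ)..ttil, U ttil s (F (u s) - F (v s)) := by
      rw [← ι.intervalIntegral_comp_comm hWii]
      apply intervalIntegral.integral_congr_ae
      filter_upwards [hne] with x hx hxI
      rw [Set.uIoc_of_le httil.le] at hxI
      have hlt : x < ttil := lt_of_le_of_ne hxI.2 hx
      calc ι (W ttil x (F (u x) - F (v x)))
          = (ι.comp (W ttil x)) (F (u x) - F (v x)) := rfl
        _ = U ttil x (F (u x) - F (v x)) := by rw [hWU x ttil hxI.1.le hlt]
    rw [h1, h2, ← hdiff]
  · set δ := ‖u₀ - v₀‖ with hδdef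
    have hδ : 0 ≤ δ := norm_nonneg _
    set I := ∫ s in (0:ℝ)..ttil, Real.exp (-lam * s) * s ^ (-η) with hIdef
    have hb1 : ‖W ttil 0 (u₀ - v₀)‖ ≤
        Ctil * Real.exp (-lam * ttil) * ttil ^ (-η) * δ := by
      calc ‖W ttil 0 (u₀ - v₀)‖ ≤ ‖W ttil 0‖ * δ := (W ttil 0).le_opNorm _
        _ ≤ Ctil * Real.exp (-lam * ttil) * ttil ^ (-η) * δ := by
            have h0 := hW 0 ttil le_rfl httil
            rw [sub_zero] at h0
            exact mul_le_mul_of_nonneg_right h0 hδ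
    have hInt : IntervalIntegrable (fun s => Real.exp (-lam * s) * s ^ (-η))
        volume 0 ttil := by
      apply IntervalIntegrable.mono_fun
        (intervalIntegral.intervalIntegrable_rpow' (a := 0) (b := ttil)
          (by linarith : (-1:ℝ) < -η))
      · rw [Set.uIoc_of_le httil.le]
        apply ContinuousOn.aestronglyMeasurable _ measurableSet_Ioc
        apply ContinuousOn.mul
          ((Real.continuous_exp.comp (continuous_const.mul continuous_id)).continuousOn)
        intro x hx
        exact (Real.continuousAt_rpow_const x (-η) (Or.inl hx.1.ne')).continuousWithinAt
      · filter_upwards [MeasureTheory.ae_restrict_mem measurableSet_uIoc] with x hx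
        rw [Set.uIoc_of_le httil.le] at hx
        have hx0 : 0 ≤ x := hx.1.le
        have hrp : (0:ℝ) ≤ x ^ (-η) := Real.rpow_nonneg hx0 _
        have hexp : Real.exp (-lam * x) ≤ 1 := by
          rw [Real.exp_le_one_iff]; nlinarith
        rw [Real.norm_eq_abs, Real.norm_eq_abs, abs_of_nonneg hrp,
          abs_of_nonneg (by positivity : (0:ℝ) ≤ Real.exp (-lam * x) * x ^ (-η))]
        nlinarith [Real.exp_pos (-lam * x)]
    have hIntc : IntervalIntegrable
        (fun s => Real.exp (-lam * (ttil - s)) * (ttil - s) ^ (-η)) volume 0 ttil := by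
      have h2 := (hInt.comp_sub_left ttil)
      have h3 := h2.symm
      simpa using h3
    have hInn : 0 ≤ I := by
      rw [hIdef]
      apply intervalIntegral.integral_nonneg httil.le
      intro x hx
      exact mul_nonneg (Real.exp_pos _).le (Real.rpow_nonneg hx.1 _)
    have hb2 : ‖∫ s in (0:ℝ)..ttil, W ttil s (F (u s) - F (v s))‖ ≤
        C_F * Ctil * c * δ * I := by
      have hgI : IntervalIntegrable
          (fun s => C_F * Ctil * c * δ *
            (Real.exp (-lam * (ttil - s)) * (ttil - s) ^ (-η))) volume 0 ttil :=
        hIntc.const_mul _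
      have hae : ∀ᵐ x ∂volume.restrict (Set.uIoc 0 ttil),
          ‖W ttil x (F (u x) - F (v x))‖ ≤ C_F * Ctil * c * δ *
            (Real.exp (-lam * (ttil - x)) * (ttil - x) ^ (-η)) := by
        filter_upwards [MeasureTheory.ae_restrict_mem measurableSet_uIoc, MeasureTheory.ae_restrict_of_ae hne]
          with x hx hxne
        rw [Set.uIoc_of_le httil.le] at hx
        have hlt : x < ttil := lt_of_le_of_ne hx.2 hxne
        have hWx := hW x ttil hx.1.le hlt
        have hFx : ‖F (u x) - F (v x)‖ ≤ C_F * (c * δ) := by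
          refine (hF _ _).trans ?_
          exact mul_le_mul_of_nonneg_left (hap x ⟨hx.1.le, hx.2⟩) hCF.le
        calc ‖W ttil x (F (u x) - F (v x))‖ ≤ ‖W ttil x‖ * ‖F (u x) - F (v x)‖ :=
              (W ttil x).le_opNorm _
          _ ≤ (Ctil * Real.exp (-lam * (ttil - x)) * (ttil - x) ^ (-η)) *
              (C_F * (c * δ)) := by
              apply mul_le_mul hWx hFx (norm_nonneg _)
              have : (0:ℝ) ≤ (ttil - x) ^ (-η) := Real.rpow_nonneg (by linarith) _
              positivity
          _ = C_F * Ctil * c * δ *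
              (Real.exp (-lam * (ttil - x)) * (ttil - x) ^ (-η)) := by ring
      have h := intervalIntegral.norm_integral_le_abs_of_norm_le hae hgI
      refine h.trans ?_
      have hnn : (0:ℝ) ≤ ∫ s in (0:ℝ)..ttil, C_F * Ctil * c * δ *
          (Real.exp (-lam * (ttil - s)) * (ttil - s) ^ (-η)) := by
        apply intervalIntegral.integral_nonneg httil.le
        intro x hx
        have : (0:ℝ) ≤ (ttil - x) ^ (-η) := Real.rpow_nonneg (by linarith [hx.2]) _
        positivity
      rw [abs_of_nonneg hnn, intervalIntegral.integral_const_mul]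
      have hsub : (∫ s in (0:ℝ)..ttil,
          Real.exp (-lam * (ttil - s)) * (ttil - s) ^ (-η)) = I := by
        rw [hIdef]
        have := intervalIntegral.integral_comp_sub_left
          (fun s => Real.exp (-lam * s) * s ^ (-η)) ttil (a := 0) (b := ttil)
        simpa using this
      rw [hsub]
    have hexp1 : Real.exp (-lam * ttil) ≤ 1 := by
      rw [Real.exp_le_one_iff]; nlinarith
    have hexp2 : 1 ≤ Real.exp (c * C_F / lam) := by
      rw [Real.one_le_exp_iff]; positivity
    have hrt : (0:ℝ) ≤ ttil ^ (-η) := Real.rpow_nonneg httil.le _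
    calc ‖W ttil 0 (u₀ - v₀) + ∫ s in (0:ℝ)..ttil, W ttil s (F (u s) - F (v s))‖
        ≤ ‖W ttil 0 (u₀ - v₀)‖ + ‖∫ s in (0:ℝ)..ttil, W ttil s (F (u s) - F (v s))‖ :=
          norm_add_le _ _
      _ ≤ Ctil * Real.exp (-lam * ttil) * ttil ^ (-η) * δ + C_F * Ctil * c * δ * I :=
          add_le_add hb1 hb2
      _ ≤ (Ctil * ttil ^ (-η) + C_F * Ctil * c * Real.exp (c * C_F / lam) * I) * δ := by
          nlinarith [mul_nonneg (mul_nonneg hCtil.le hrt) hδ,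
            mul_nonneg (mul_nonneg (mul_nonneg (mul_nonneg hCF.le hCtil.le) hc.le) hδ) hInn,
            Real.exp_pos (-lam * ttil)]
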